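/- Let 𝒜 = [Z, R₁, R₂] be a consistent bounded preference system on a finite set Z = {z₁,…,z_s} with minimal element z₁ and maximal element z₂, and let p, q : Z → [0,1] be probability mass functions on Z. Then inf_{u ∈ 𝒩_𝒜} Σ_{ℓ=1}^{s} u(z_ℓ)·(p(z_ℓ) − q(z_ℓ)) ≥ 0 if and only if min_{(v₁,…,v_s) ∈ C₀} Σ_{ℓ=1}^{s} v_ℓ·(p(z_ℓ) − q(z_ℓ)) ≥ 0. -/

import Mathlib

open MeasureTheory
open scoped BigOperators

namespace GSD

/-- The strict part `P_R` of a binary relation `R`. -/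
def strictPart {α : Type*} (R : α → α → Prop) (a b : α) : Prop := R a b ∧ ¬ R b a

/-- The indifference part `I_R` of a binary relation `R`. -/
def indiffPart {α : Type*} (R : α → α → Prop) (a b : α) : Prop := R a b ∧ R b a

/-- `[A, R1, R2]` is a preference system: `R1` is a preorder on `A` and `R2` is a preorder
on `R1` (i.e. a reflexive-transitive relation supported on pairs belonging to `R1`). -/
structure IsPrefSystem {A : Type*} (R1 : A → A → Prop) (R2 : A × A → A × A → Prop) : Prop where
  refl1 : ∀ a, R1 a a
  trans1 : ∀ a b c, R1 a b → R1 b c → R1 a c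
  sub2 : ∀ p q, R2 p q → R1 p.1 p.2 ∧ R1 q.1 q.2
  refl2 : ∀ p, R1 p.1 p.2 → R2 p p
  trans2 : ∀ p q r, R2 p q → R2 q r → R2 p r

/-- `u` is a representation of the preference system `[A, R1, R2]`. -/
def IsRepresentation {A : Type*} (R1 : A → A → Prop) (R2 : A × A → A × A → Prop)
    (u : A → ℝ) : Prop :=
  (∀ a b, R1 a b → (u b ≤ u a ∧ (u a = u b ↔ R1 b a))) ∧
  (∀ a b c d, R2 (a, b) (c, d) →
    (u c - u d ≤ u a - u b ∧ (u a - u b = u c - u d ↔ R2 (c, d) (a, b))))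

/-- A preference system is consistent if it admits a representation. -/
def Consistent {A : Type*} (R1 : A → A → Prop) (R2 : A × A → A × A → Prop) : Prop :=
  ∃ u, IsRepresentation R1 R2 u

/-- The preference system is bounded with minimal element `a0` and maximal element `a1`. -/
def Bounded {A : Type*} (R1 : A → A → Prop) (a0 a1 : A) : Prop :=
  (∀ a, R1 a1 a) ∧ (∀ a, R1 a a0) ∧ strictPart R1 a1 a0

/-- Membership in the normalized representation set `𝒩_𝒜`. -/
def NormRep {A : Type*} (R1 : A → A → Prop) (R2 : A × A → A × A → Prop) (a0 a1 : A)
    (u : A → ℝ) : Prop :=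
  IsRepresentation R1 R2 u ∧ u a0 = 0 ∧ u a1 = 1

/-- Membership in `𝒩^δ_𝒜`: normalized representations separating strict pairs by at least `δ`. -/
def NormRepDelta {A : Type*} (R1 : A → A → Prop) (R2 : A × A → A × A → Prop) (a0 a1 : A)
    (δ : ℝ) (u : A → ℝ) : Prop :=
  NormRep R1 R2 a0 a1 u ∧
  (∀ a b, strictPart R1 a b → δ ≤ u a - u b) ∧
  (∀ c d e f, strictPart R2 (c, d) (e, f) → δ ≤ u c - u d - u e + u f)

/-- The constraint set `C` of vectors `(v₁,…,v_s,ξ) ∈ [0,1]^{s+1}`. -/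
def ConstraintSet {s : ℕ} (R1 : Fin s → Fin s → Prop)
    (R2 : (Fin s × Fin s) → (Fin s × Fin s) → Prop) (a0 a1 : Fin s) :
    Set ((Fin s → ℝ) × ℝ) :=
  {w | (∀ i, w.1 i ∈ Set.Icc (0:ℝ) 1) ∧ w.2 ∈ Set.Icc (0:ℝ) 1 ∧
    w.1 a0 = 0 ∧ w.1 a1 = 1 ∧
    (∀ i j, indiffPart R1 i j → w.1 i = w.1 j) ∧
    (∀ i j, strictPart R1 i j → w.2 ≤ w.1 i - w.1 j) ∧
    (∀ k l r t, indiffPart R2 (k, l) (r, t) → w.1 k - w.1 l = w.1 r - w.1 t) ∧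
    (∀ k l r t, strictPart R2 (k, l) (r, t) → w.2 ≤ w.1 k - w.1 l - w.1 r + w.1 t)}

/-- The slice `C_{ξ₀}` of the constraint set at threshold `ξ₀`. -/
def ConstraintSetAt {s : ℕ} (R1 : Fin s → Fin s → Prop)
    (R2 : (Fin s × Fin s) → (Fin s × Fin s) → Prop) (a0 a1 : Fin s) (ξ0 : ℝ) :
    Set (Fin s → ℝ) :=
  {v | (v, ξ0) ∈ ConstraintSet R1 R2 a0 a1}

/-- `p` is a probability mass function on `Fin s` (with values in `[0,1]`). -/
def IsPMF {s : ℕ} (p : Fin s → ℝ) : Prop :=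
  (∀ i, p i ∈ Set.Icc (0:ℝ) 1) ∧ ∑ i, p i = 1

lemma norm_exists {A : Type*} {R1 : A → A → Prop} {R2 : A × A → A × A → Prop} {a0 a1 : A}
    (hcons : Consistent R1 R2) (hbd : Bounded R1 a0 a1) :
    ∃ u, NormRep R1 R2 a0 a1 u := by
  obtain ⟨u, h1, h2⟩ := hcons
  obtain ⟨hmax, hmin, hR, hnR⟩ := hbd
  have h01 := h1 a1 a0 hR
  have hlt : u a0 < u a1 := lt_of_le_of_ne h01.1 (fun he => hnR (h01.2.1 he.symm))
  set c := u a1 - u a0 with hcdef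
  have hc : 0 < c := sub_pos.2 hlt
  have hc' : c ≠ 0 := hc.ne'
  have key : ∀ a b : A, (u a - u a0) / c = (u b - u a0) / c ↔ u a = u b := by
    intro a b
    rw [div_eq_div_iff hc' hc']
    constructor
    · intro h; nlinarith [mul_left_cancel₀ hc' (by linarith : c * (u a) = c * (u b))]
    · intro h; rw [h]
  refine ⟨fun i => (u i - u a0) / c, ⟨?_, ?_⟩, by simp, by field_simp; exact hcdef.symm⟩
  · intro a b hab
    have h := h1 a b hab
    refine ⟨(div_le_div_iff_of_pos_right hc).2 (by linarith [h.1]), ?_⟩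
    rw [key]; exact h.2
  · intro a b c' d hab
    have h := h2 a b c' d hab
    have e1 : ∀ x y : A, (u x - u a0) / c - (u y - u a0) / c = (u x - u y) / c := by
      intro x y; ring
    rw [e1, e1]
    refine ⟨(div_le_div_iff_of_pos_right hc).2 (by linarith [h.1]), ?_⟩
    rw [div_eq_div_iff hc' hc']
    constructor
    · intro hh
      have : u a - u b = u c' - u d := by
        nlinarith [mul_left_cancel₀ hc' (by linarith : c * (u a - u b) = c * (u c' - u d))]
      exact h.2.1 this
    · intro hh; rw [h.2.2 hh]

lemma mem_C0_iff {s : ℕ} {R1 : Fin s → Fin s → Prop}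
    {R2 : (Fin s × Fin s) → (Fin s × Fin s) → Prop} {a0 a1 : Fin s} {v : Fin s → ℝ} :
    v ∈ ConstraintSetAt R1 R2 a0 a1 0 ↔
    ((∀ i, v i ∈ Set.Icc (0:ℝ) 1) ∧
    v a0 = 0 ∧ v a1 = 1 ∧
    (∀ i j, indiffPart R1 i j → v i = v j) ∧
    (∀ i j, strictPart R1 i j → (0:ℝ) ≤ v i - v j) ∧
    (∀ k l r t, indiffPart R2 (k, l) (r, t) → v k - v l = v r - v t) ∧
    (∀ k l r t, strictPart R2 (k, l) (r, t) → (0:ℝ) ≤ v k - v l - v r + v t)) := by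
  unfold ConstraintSetAt ConstraintSet
  simp only [Set.mem_setOf_eq]
  constructor
  · rintro ⟨h1, _, h3, h4, h5, h6, h7, h8⟩
    exact ⟨h1, h3, h4, h5, h6, h7, h8⟩
  · rintro ⟨h1, h3, h4, h5, h6, h7, h8⟩
    exact ⟨h1, by norm_num, h3, h4, h5, h6, h7, h8⟩

lemma normRep_mem_C0 {s : ℕ} {R1 : Fin s → Fin s → Prop}
    {R2 : (Fin s × Fin s) → (Fin s × Fin s) → Prop} {a0 a1 : Fin s}
    (hbd : Bounded R1 a0 a1) {u : Fin s → ℝ} (hu : NormRep R1 R2 a0 a1 u) :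
    u ∈ ConstraintSetAt R1 R2 a0 a1 0 := by
  obtain ⟨⟨h1, h2⟩, hu0, hu1⟩ := hu
  obtain ⟨hmax, hmin, _⟩ := hbd
  rw [mem_C0_iff]
  refine ⟨?_, hu0, hu1, ?_, ?_, ?_, ?_⟩
  · intro i
    constructor
    · have := (h1 i a0 (hmin i)).1; simpa [hu0] using this
    · have := (h1 a1 i (hmax i)).1; simpa [hu1] using this
  · intro i j hij
    exact (h1 i j hij.1).2.2 hij.2
  · intro i j hij
    have := (h1 i j hij.1).1; linarith
  · intro k l r t hij
    exact (h2 k l r t hij.1).2.2 hij.2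
  · intro k l r t hij
    have := (h2 k l r t hij.1).1; linarith

lemma combo_normRep {s : ℕ} {R1 : Fin s → Fin s → Prop}
    {R2 : (Fin s × Fin s) → (Fin s × Fin s) → Prop} {a0 a1 : Fin s}
    {v : Fin s → ℝ} (hv : v ∈ ConstraintSetAt R1 R2 a0 a1 0)
    {u : Fin s → ℝ} (hu : NormRep R1 R2 a0 a1 u) {ε : ℝ} (hε : 0 < ε) (hε1 : ε ≤ 1) :
    NormRep R1 R2 a0 a1 (fun i => (1 - ε) * v i + ε * u i) := by
  rw [mem_C0_iff] at hv
  obtain ⟨_, hv0, hv1, hvI1, hvS1, hvI2, hvS2⟩ := hv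
  obtain ⟨⟨h1, h2⟩, hu0, hu1⟩ := hu
  have hε' : (0:ℝ) ≤ 1 - ε := by linarith
  refine ⟨⟨?_, ?_⟩, by simp [hv0, hu0], by simp [hv1, hu1]⟩
  · intro a b hab
    simp only
    by_cases hba : R1 b a
    · have e1 : v a = v b := hvI1 a b ⟨hab, hba⟩
      have e2 : u a = u b := (h1 a b hab).2.2 hba
      rw [e1, e2]
      exact ⟨le_refl _, by simp [hba]⟩
    · have e1 : (0:ℝ) ≤ v a - v b := hvS1 a b ⟨hab, hba⟩
      have e2 : u b < u a :=
        lt_of_le_of_ne (h1 a b hab).1 (fun h => ((h1 a b hab).2.not.2 hba) h.symm)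
      have key : (1 - ε) * v b + ε * u b < (1 - ε) * v a + ε * u a := by
        nlinarith [mul_nonneg hε' e1, mul_pos hε (sub_pos.2 e2)]
      exact ⟨key.le, ⟨fun h => absurd h key.ne', fun h => absurd h hba⟩⟩
  · intro a b c d hab
    simp only
    by_cases hba : R2 (c, d) (a, b)
    · have e1 : v a - v b = v c - v d := hvI2 a b c d ⟨hab, hba⟩
      have e2 : u a - u b = u c - u d := (h2 a b c d hab).2.2 hba
      have key : (1 - ε) * v a + ε * u a - ((1 - ε) * v b + ε * u b)
          = (1 - ε) * v c + ε * u c - ((1 - ε) * v d + ε * u d) := by nlinarith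
      exact ⟨key.ge, ⟨fun _ => hba, fun _ => key⟩⟩
    · have e1 : (0:ℝ) ≤ v a - v b - v c + v d := hvS2 a b c d ⟨hab, hba⟩
      have e2 : u c - u d < u a - u b :=
        lt_of_le_of_ne (h2 a b c d hab).1 (fun h => ((h2 a b c d hab).2.not.2 hba) h.symm)
      have key : (1 - ε) * v c + ε * u c - ((1 - ε) * v d + ε * u d)
          < (1 - ε) * v a + ε * u a - ((1 - ε) * v b + ε * u b) := by
        nlinarith [mul_nonneg hε' e1, mul_pos hε (sub_pos.2 e2)]
      exact ⟨key.le, ⟨fun h => absurd h key.ne', fun h => absurd h hba⟩⟩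


/-- Proposition 4 ii): in-sample GSD (infimum over `𝒩_𝒜` nonnegative) holds iff the
optimal value of the linear program over `C₀` is nonnegative. -/
theorem stmt6 {s : ℕ} (R1 : Fin s → Fin s → Prop)
    (R2 : (Fin s × Fin s) → (Fin s × Fin s) → Prop) (a0 a1 : Fin s)
    (hps : IsPrefSystem R1 R2) (hcons : Consistent R1 R2) (hbd : Bounded R1 a0 a1)
    (p q : Fin s → ℝ) (hp : IsPMF p) (hq : IsPMF q) :
    0 ≤ sInf {x | ∃ u, NormRep R1 R2 a0 a1 u ∧ x = ∑ i, u i * (p i - q i)} ↔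
    0 ≤ sInf {x | ∃ v ∈ ConstraintSetAt R1 R2 a0 a1 0,
        x = ∑ i, v i * (p i - q i)} := by
  set S : (Fin s → ℝ) → ℝ := fun w => ∑ i, w i * (p i - q i) with hS
  set N : Set ℝ := {x | ∃ u, NormRep R1 R2 a0 a1 u ∧ x = S u} with hN
  set Cs : Set ℝ := {x | ∃ v ∈ ConstraintSetAt R1 R2 a0 a1 0, x = S v} with hCs
  obtain ⟨u0, hu0⟩ := norm_exists hcons hbd
  have hNC : N ⊆ Cs := by
    rintro x ⟨u, hu, rfl⟩
    exact ⟨u, normRep_mem_C0 hbd hu, rfl⟩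
  have hNne : N.Nonempty := ⟨S u0, u0, hu0, rfl⟩
  have hCne : Cs.Nonempty := hNne.mono hNC
  have hCbdd : BddBelow Cs := by
    refine ⟨-1, ?_⟩
    rintro x ⟨v, hv, rfl⟩
    have hvbd := (mem_C0_iff.1 hv).1
    have hb : ∀ i, -(q i) ≤ v i * (p i - q i) := by
      intro i
      have h1 := hvbd i
      have h2 := hp.1 i
      have h3 := hq.1 i
      simp only [Set.mem_Icc] at h1 h2 h3
      nlinarith
    have hsum : ∑ i, -(q i) = -1 := by
      rw [Finset.sum_neg_distrib, hq.2]
    calc (-1:ℝ) = ∑ i, -(q i) := hsum.symm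
      _ ≤ S v := Finset.sum_le_sum (fun i _ => hb i)
  have hNbdd : BddBelow N := hCbdd.mono hNC
  constructor
  · intro h
    refine le_csInf hCne ?_
    rintro x ⟨v, hv, rfl⟩
    by_contra hneg
    push_neg at hneg
    have hT : 0 ≤ S u0 := le_trans h (csInf_le hNbdd ⟨u0, hu0, rfl⟩)
    set T := S u0
    have hd : 0 < T - S v := by linarith
    set ε : ℝ := -(S v) / (2 * (T - S v)) with hεdef
    have hε : 0 < ε := div_pos (by linarith) (by linarith)
    have hε1 : ε ≤ 1 := by
      rw [div_le_one (by linarith)]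
      linarith
    have hmem : S (fun i => (1 - ε) * v i + ε * u0 i) ∈ N :=
      ⟨_, combo_normRep hv hu0 hε hε1, rfl⟩
    have hpos : 0 ≤ S (fun i => (1 - ε) * v i + ε * u0 i) :=
      le_trans h (csInf_le hNbdd hmem)
    have hsum : S (fun i => (1 - ε) * v i + ε * u0 i) = (1 - ε) * S v + ε * T := by
      simp only [hS]
      rw [Finset.mul_sum, Finset.mul_sum, ← Finset.sum_add_distrib]
      exact Finset.sum_congr rfl (fun i _ => by ring)
    have hkey : ε * (T - S v) = -(S v) / 2 := by
      rw [hεdef]; field_simp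
    rw [hsum] at hpos
    nlinarith
  · intro h
    refine le_csInf hNne ?_
    intro x hx
    exact le_trans h (csInf_le hCbdd (hNC hx))

end GSD
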